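/- Let E ⊆ ℂ be the open unit disc, let (q_k)_{k≥1} be an enumeration of (ℚ+iℚ)∩E, and put S := ⋃_{k=1}^∞ {q_k} × closedDisc(1−1/k, 1/k²) ⊆ E×E, where closedDisc(c,r) is the closed disc in ℂ with center c and radius r. Then: (i) S is relatively closed in E×E; (ii) int S = ∅; (iii) for every domain U ⊆ E×E the set U∖S is connected; and (iv) the set A := {a ∈ E : the fiber S_{(a,·)} has empty interior in ℂ} equals E∖(ℚ+iℚ), which has empty interior in ℂ. In particular, there exist a domain U ⊆ E×E such that (A×B)∩U∖S contains no open polydisc, where B := {b ∈ E : S_{(·,b)} has empty interior} = E. -/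

import Mathlib

open Filter Topology Set

noncomputable section

namespace JP

/-- A function `u : ℂ → EReal` is *subharmonic* on an open set `Ω ⊆ ℂ`:
it is upper semicontinuous on `Ω` and satisfies the maximum principle against real
parts of complex polynomials on all closed discs contained in `Ω`. -/
def SubharmonicOn (u : ℂ → EReal) (Ω : Set ℂ) : Prop :=
  UpperSemicontinuousOn u Ω ∧
  ∀ c : ℂ, ∀ r : ℝ, 0 < r → Metric.closedBall c r ⊆ Ω →
    ∀ p : Polynomial ℂ,
      (∀ z ∈ Metric.sphere c r, u z ≤ (((p.eval z).re : ℝ) : EReal)) →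
      ∀ z ∈ Metric.closedBall c r, u z ≤ (((p.eval z).re : ℝ) : EReal)

variable {E : Type*}

/-- Plurisubharmonic on `Ω ⊆ E`: upper semicontinuous on `Ω` and subharmonic along
every complex line. -/
def PSHOn [AddCommGroup E] [Module ℂ E] [TopologicalSpace E]
    (u : E → EReal) (Ω : Set E) : Prop :=
  UpperSemicontinuousOn u Ω ∧
  ∀ a b : E, SubharmonicOn (fun t : ℂ => u (a + t • b)) {t : ℂ | a + t • b ∈ Ω}

/-- `P` is pluripolar: locally contained in the `-∞` set of a plurisubharmonic
function which is not identically `-∞`. -/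
def Pluripolar [AddCommGroup E] [Module ℂ E] [TopologicalSpace E] (P : Set E) : Prop :=
  ∀ a ∈ P, ∃ Ω : Set E, IsOpen Ω ∧ a ∈ Ω ∧
    ∃ u : E → EReal, PSHOn u Ω ∧ (∃ z ∈ Ω, u z ≠ ⊥) ∧ ∀ z ∈ P ∩ Ω, u z = ⊥

/-- `P ⊆ ℂ` is polar: locally contained in the `-∞` set of a subharmonic
function which is not identically `-∞`. -/
def PolarIn (P : Set ℂ) : Prop :=
  ∀ a ∈ P, ∃ Ω : Set ℂ, IsOpen Ω ∧ a ∈ Ω ∧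
    ∃ u : ℂ → EReal, SubharmonicOn u Ω ∧ (∃ z ∈ Ω, u z ≠ ⊥) ∧ ∀ z ∈ P ∩ Ω, u z = ⊥

/-- `A` is thin at `a` (one complex variable). -/
def ThinAt (A : Set ℂ) (a : ℂ) : Prop :=
  a ∉ closure A ∨ ∃ U : Set ℂ, IsOpen U ∧ a ∈ U ∧ ∃ u : ℂ → EReal,
    SubharmonicOn u U ∧ Filter.limsup u (nhdsWithin a (A \ {a})) < u a

/-- `A` is plurithin at `a`. -/
def PlurithinAt [AddCommGroup E] [Module ℂ E] [TopologicalSpace E]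
    (A : Set E) (a : E) : Prop :=
  a ∉ closure A ∨ ∃ U : Set E, IsOpen U ∧ a ∈ U ∧ ∃ u : E → EReal,
    PSHOn u U ∧ Filter.limsup u (nhdsWithin a (A \ {a})) < u a

/-- The relative extremal function `h_{A,Ω}`. -/
def relExtremal [AddCommGroup E] [Module ℂ E] [TopologicalSpace E]
    (A Ω : Set E) : E → EReal :=
  fun z => sSup {v : EReal | ∃ u : E → EReal, PSHOn u Ω ∧ (∀ w ∈ Ω, u w ≤ 1) ∧
    (∀ w ∈ A, u w ≤ 0) ∧ v = u z}

/-- The one-variable relative extremal function `h_{A,Ω}` (subharmonic competitors). -/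
def relExtremalC (A Ω : Set ℂ) : ℂ → EReal :=
  fun z => sSup {v : EReal | ∃ u : ℂ → EReal, SubharmonicOn u Ω ∧ (∀ w ∈ Ω, u w ≤ 1) ∧
    (∀ w ∈ A, u w ≤ 0) ∧ v = u z}

/-- Upper semicontinuous regularization within `Ω`. -/
def uscRegIn [TopologicalSpace E] (Ω : Set E) (u : E → EReal) : E → EReal :=
  fun z => Filter.limsup u (nhdsWithin z Ω)

/-- `h*_{A,Ω}`. -/
def hStar [AddCommGroup E] [Module ℂ E] [TopologicalSpace E] (A Ω : Set E) : E → EReal :=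
  uscRegIn Ω (relExtremal A Ω)

/-- `h*_{A,Ω}`, one variable. -/
def hStarC (A Ω : Set ℂ) : ℂ → EReal :=
  uscRegIn Ω (relExtremalC A Ω)

/-- `A` is locally pluriregular at `a`. -/
def LocallyPluriregularAt [AddCommGroup E] [Module ℂ E] [TopologicalSpace E]
    (A : Set E) (a : E) : Prop :=
  ∀ Ω : Set E, IsOpen Ω → a ∈ Ω → hStar (A ∩ Ω) Ω a = 0

/-- `A` is locally pluriregular. -/
def LocallyPluriregular [AddCommGroup E] [Module ℂ E] [TopologicalSpace E]
    (A : Set E) : Prop :=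
  A.Nonempty ∧ ∀ a ∈ A, LocallyPluriregularAt A a

/-- A canonical exhaustion of an open set `Ω` by relatively compact open subsets. -/
def exhaust [NormedAddCommGroup E] (Ω : Set E) (k : ℕ) : Set E :=
  {z ∈ Ω | ‖z‖ < (k : ℝ) + 1 ∧ (Ωᶜ = (∅ : Set E) ∨ ((k : ℝ) + 1)⁻¹ < Metric.infDist z Ωᶜ)}

open scoped Classical in
/-- `ω_{A,Ω} = lim_k h*_{A∩Ω_k,Ω_k}` (a decreasing limit, realized as an infimum). -/
def omegaFn [NormedAddCommGroup E] [NormedSpace ℂ E] (A Ω : Set E) : E → EReal :=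
  fun z => ⨅ k : ℕ,
    if z ∈ exhaust Ω k then hStar (A ∩ exhaust Ω k) (exhaust Ω k) z else (⊤ : EReal)

/-- Hartogs pseudoconvexity: `Ω` is open and `-log dist(·, ∁Ω)` is plurisubharmonic
on `Ω`. -/
def IsPseudoconvex [NormedAddCommGroup E] [NormedSpace ℂ E] (Ω : Set E) : Prop :=
  IsOpen Ω ∧ (Ω = Set.univ ∨
    PSHOn (fun z => ((- Real.log (Metric.infDist z Ωᶜ) : ℝ) : EReal)) Ω)

/-- `M` is relatively closed in `X`. -/
def RelClosedIn [TopologicalSpace E] (M X : Set E) : Prop :=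
  M ⊆ X ∧ closure M ∩ X ⊆ M

/-- `f` is meromorphic on the open set `Ω` with polar set `P`: `P` is relatively
closed in `Ω`, `f` is holomorphic on `Ω \ P`, and locally `f = g/h` with `g, h`
holomorphic, `h ≢ 0`, and `P` contained in the zero set of `h`. -/
def MeromorphicWithPolarOn [NormedAddCommGroup E] [NormedSpace ℂ E]
    (f : E → ℂ) (P Ω : Set E) : Prop :=
  IsOpen Ω ∧ P ⊆ Ω ∧ closure P ∩ Ω ⊆ P ∧
  DifferentiableOn ℂ f (Ω \ P) ∧
  ∀ a ∈ Ω, ∃ U : Set E, IsOpen U ∧ IsPreconnected U ∧ a ∈ U ∧ U ⊆ Ω ∧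
    ∃ g h : E → ℂ, DifferentiableOn ℂ g U ∧ DifferentiableOn ℂ h U ∧
      (∃ z ∈ U, h z ≠ 0) ∧ (U ∩ P ⊆ {z | h z = 0}) ∧
      ∀ z ∈ U, h z ≠ 0 → f z = g z / h z

/-- `S` is an analytic subset of the open set `Ω`: locally the common zero set of
finitely many holomorphic functions. -/
def IsAnalyticIn [NormedAddCommGroup E] [NormedSpace ℂ E] (Ω S : Set E) : Prop :=
  S ⊆ Ω ∧ ∀ a ∈ Ω, ∃ U : Set E, IsOpen U ∧ a ∈ U ∧ U ⊆ Ω ∧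
    ∃ (k : ℕ) (g : Fin k → E → ℂ), (∀ i, DifferentiableOn ℂ (g i) U) ∧
      S ∩ U = {z ∈ U | ∀ i, g i z = 0}

/-! ### Two-fold crosses -/

variable {F : Type*}

/-- The 2-fold cross `𝕏(A,B;D,G) = (A×G) ∪ (D×B)`. -/
def Cross2 (A D : Set E) (B G : Set F) : Set (E × F) :=
  (A ×ˢ G) ∪ (D ×ˢ B)

/-- The envelope `X̂ = {(z,w) ∈ D×G : ω_{A,D}(z) + ω_{B,G}(w) < 1}`. -/
def Cross2Hat [NormedAddCommGroup E] [NormedSpace ℂ E]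
    [NormedAddCommGroup F] [NormedSpace ℂ F] (A D : Set E) (B G : Set F) :
    Set (E × F) :=
  {p | p.1 ∈ D ∧ p.2 ∈ G ∧ omegaFn A D p.1 + omegaFn B G p.2 < (1 : EReal)}

/-- `f` is separately meromorphic on the 2-fold cross `X = 𝕏(A,B;D,G)` off the
relatively closed set `S ⊆ X`. -/
def SepMeromorphic2 [NormedAddCommGroup E] [NormedSpace ℂ E]
    [NormedAddCommGroup F] [NormedSpace ℂ F]
    (A D : Set E) (B G : Set F) (S : Set (E × F)) (f : E × F → ℂ) : Prop :=
  (∀ a ∈ A, {w | (a, w) ∈ S} ≠ G →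
    ∃ (F₀ : F → ℂ) (P : Set F), MeromorphicWithPolarOn F₀ P G ∧
      ∀ w ∈ G, (a, w) ∉ S → w ∉ P → F₀ w = f (a, w)) ∧
  (∀ b ∈ B, {z | (z, b) ∈ S} ≠ D →
    ∃ (F₀ : E → ℂ) (P : Set E), MeromorphicWithPolarOn F₀ P D ∧
      ∀ z ∈ D, (z, b) ∉ S → z ∉ P → F₀ z = f (z, b))

/-! ### `N`-fold crosses -/

variable {N : ℕ} {n : Fin N → ℕ}

/-- A point of `ℂ^{n_1} × ⋯ × ℂ^{n_N}`. -/
abbrev CPt (n : Fin N → ℕ) := ∀ j : Fin N, Fin (n j) → ℂ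

/-- A point of the product of all factors except the `j`-th. -/
abbrev CRest (n : Fin N → ℕ) (j : Fin N) := ∀ i : {i : Fin N // i ≠ j}, Fin (n i.1) → ℂ

/-- Forget the `j`-th coordinate. -/
def restOf (j : Fin N) (z : CPt n) : CRest n j := fun i => z i.1

/-- The `N`-fold cross `𝕏(A_1,…,A_N; D_1,…,D_N)`. -/
def Cross (A D : ∀ j : Fin N, Set (Fin (n j) → ℂ)) : Set (CPt n) :=
  {z | ∃ j, z j ∈ D j ∧ ∀ i, i ≠ j → z i ∈ A i}

/-- The fiber `M_{(z',·,z'')}` of `M` in the `j`-th direction through `z`. -/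
def fiberSet (M : Set (CPt n)) (j : Fin N) (z : CPt n) : Set (Fin (n j) → ℂ) :=
  {w | Function.update z j w ∈ M}

/-- `Σ_j(M)`: the set of `(z',z'')` (with all coordinates in the `A_i`) whose fiber
`M_{(z',·,z'')}` is not pluripolar. -/
def SigmaSet (A : ∀ j : Fin N, Set (Fin (n j) → ℂ)) (M : Set (CPt n)) (j : Fin N) :
    Set (CRest n j) :=
  {y | (∀ i : {i : Fin N // i ≠ j}, y i ∈ A i.1) ∧
    ∃ z : CPt n, restOf j z = y ∧ ¬ Pluripolar (fiberSet M j z)}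

/-- The generalized `N`-fold cross `𝕋(A_1,…,A_N; D_1,…,D_N; S_1,…,S_N)`. -/
def GenCross (A D : ∀ j : Fin N, Set (Fin (n j) → ℂ)) (S : ∀ j : Fin N, Set (CRest n j)) :
    Set (CPt n) :=
  {z | ∃ j, z j ∈ D j ∧ (∀ i, i ≠ j → z i ∈ A i) ∧ restOf j z ∉ S j}

/-- The envelope `X̂` of the cross. -/
def CrossHat (A D : ∀ j : Fin N, Set (Fin (n j) → ℂ)) : Set (CPt n) :=
  {z | (∀ j, z j ∈ D j) ∧ ∑ j : Fin N, omegaFn (A j) (D j) (z j) < (1 : EReal)}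

/-- `f` is separately holomorphic on `T \ M`, where
`T = 𝕋(A_1,…,A_N; D_1,…,D_N; S_1,…,S_N)`. -/
def SepHolomorphicOn (A D : ∀ j : Fin N, Set (Fin (n j) → ℂ))
    (S : ∀ j : Fin N, Set (CRest n j)) (M : Set (CPt n)) (f : CPt n → ℂ) : Prop :=
  ∀ j : Fin N, ∀ z : CPt n, (∀ i, i ≠ j → z i ∈ A i) → restOf j z ∉ S j →
    DifferentiableOn ℂ (fun w => f (Function.update z j w)) (D j \ fiberSet M j z)

/-- `f` is separately meromorphic on `X \ M` (with an additional relatively closed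
singularity set `S ⊆ X \ M` off which `f` is defined): every slice through
admissible `(a',a'')` whose `(M∪S)`-fiber differs from `D_j` extends
meromorphically to `D_j` minus the `M`-fiber. -/
def SepMeromorphicOnCross (A D : ∀ j : Fin N, Set (Fin (n j) → ℂ))
    (M S : Set (CPt n)) (f : CPt n → ℂ) : Prop :=
  ∀ j : Fin N, ∀ z : CPt n, (∀ i, i ≠ j → z i ∈ A i) →
    fiberSet (M ∪ S) j z ≠ D j →
    ∃ (F : (Fin (n j) → ℂ) → ℂ) (P : Set (Fin (n j) → ℂ)),
      MeromorphicWithPolarOn F P (D j \ fiberSet M j z) ∧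
      ∀ w ∈ D j \ fiberSet (M ∪ S) j z, w ∉ P → F w = f (Function.update z j w)

/-- The conclusions of the main extension theorem (Theorem 1.1) for the pair
`(M, M̂)`: `M̂ ⊆ X̂` is relatively closed, pluripolar, `M̂ ∩ X' ⊆ M`, every
separately holomorphic function on `X ∖ M` has exactly one holomorphic extension to
`X̂ ∖ M̂` agreeing with it on `X' ∖ M`, and `M̂` is singular with respect to the
family of these extensions. -/
def MTProperties (A D : ∀ j : Fin N, Set (Fin (n j) → ℂ)) (M Mhat : Set (CPt n)) : Prop :=
  RelClosedIn Mhat (CrossHat A D) ∧ Pluripolar Mhat ∧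
  Mhat ∩ GenCross A D (SigmaSet A M) ⊆ M ∧
  (∀ f : CPt n → ℂ, SepHolomorphicOn A D (fun _ => ∅) M f →
    ∃ g : CPt n → ℂ,
      (DifferentiableOn ℂ g (CrossHat A D \ Mhat) ∧
        Set.EqOn g f (GenCross A D (SigmaSet A M) \ M)) ∧
      ∀ g' : CPt n → ℂ, DifferentiableOn ℂ g' (CrossHat A D \ Mhat) →
        Set.EqOn g' f (GenCross A D (SigmaSet A M) \ M) →
        Set.EqOn g' g (CrossHat A D \ Mhat)) ∧
  (∀ a ∈ Mhat, ∀ U : Set (CPt n), IsOpen U → a ∈ U →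
    ∃ f : CPt n → ℂ, SepHolomorphicOn A D (fun _ => ∅) M f ∧
      ∀ g : CPt n → ℂ, DifferentiableOn ℂ g (CrossHat A D \ Mhat) →
        Set.EqOn g f (GenCross A D (SigmaSet A M) \ M) →
        ¬ ∃ h : CPt n → ℂ, DifferentiableOn ℂ h U ∧
          Set.EqOn h g ((U ∩ CrossHat A D) \ Mhat))

end JP

section SakaiHelpers

private lemma countable_interior_empty' {s : Set ℂ} (hs : s.Countable) : interior s = ∅ :=
  interior_eq_empty_iff_dense_compl.2 (hs.dense_compl ℂ)

private lemma gaussian_dense' :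
    Dense {z : ℂ | ∃ r s : ℚ, z = (r : ℂ) + (s : ℂ) * Complex.I} := by
  rw [Metric.dense_iff]
  intro x ε hε
  obtain ⟨r, hr⟩ := exists_rat_near x.re (half_pos hε)
  obtain ⟨s, hs⟩ := exists_rat_near x.im (half_pos hε)
  refine ⟨(r : ℂ) + (s : ℂ) * Complex.I, ?_, ⟨r, s, rfl⟩⟩
  rw [Metric.mem_ball, Complex.dist_eq]
  have h1 : (x - ((r : ℂ) + (s : ℂ) * Complex.I)).re = x.re - r := by simp
  have h2 : (x - ((r : ℂ) + (s : ℂ) * Complex.I)).im = x.im - s := by simp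
  have h3 := Complex.norm_le_abs_re_add_abs_im (x - ((r : ℂ) + (s : ℂ) * Complex.I))
  rw [h1, h2] at h3
  rw [norm_sub_rev]
  linarith

private lemma ball_diff_countable' {c : ℂ} {r : ℝ} (hr : 0 < r) {C : Set ℂ}
    (hC : C.Countable) : IsPathConnected (Metric.ball c r \ C) := by
  have hinj : Function.Injective (OpenPartialHomeomorph.univBall c r) := by
    rw [← Set.injOn_univ, ← OpenPartialHomeomorph.univBall_source c r]
    exact (OpenPartialHomeomorph.univBall c r).injOn
  have hrank : 1 < Module.rank ℝ ℂ := by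
    exact Complex.rank_real_complex ▸ Nat.one_lt_ofNat
  have hpc : IsPathConnected (((OpenPartialHomeomorph.univBall c r) ⁻¹' C)ᶜ) :=
    (hC.preimage hinj).isPathConnected_compl_of_one_lt_rank hrank
  have himg : (OpenPartialHomeomorph.univBall c r) '' (((OpenPartialHomeomorph.univBall c r) ⁻¹' C)ᶜ)
      = Metric.ball c r \ C := by
    have hr1 : Set.range (OpenPartialHomeomorph.univBall c r) = Metric.ball c r := by
      rw [← Set.image_univ, ← OpenPartialHomeomorph.univBall_source c r,
        (OpenPartialHomeomorph.univBall c r).image_source_eq_target,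
        OpenPartialHomeomorph.univBall_target c hr]
    rw [Set.compl_eq_univ_diff, Set.image_diff hinj, Set.image_univ,
      Set.image_preimage_eq_inter_range, hr1, Set.diff_inter_self_eq_diff]
  rw [← himg]
  exact hpc.image (OpenPartialHomeomorph.continuous_univBall c r)

private lemma ball_diff_S' (q : ℕ → ℂ) {S : Set (ℂ × ℂ)}
    (hS : ∀ p ∈ S, p.1 ∈ Set.range q) (p : ℂ × ℂ) {r : ℝ} (hr : 0 < r) :
    IsPathConnected (Metric.ball p r \ S) := by
  have hball : Metric.ball p r = Metric.ball p.1 r ×ˢ Metric.ball p.2 r := by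
    rw [ball_prod_same]
  obtain ⟨z'', hz''b, hz''q⟩ :=
    ((Set.countable_range q).dense_compl ℂ).inter_open_nonempty
      (Metric.ball p.1 r) Metric.isOpen_ball ⟨p.1, Metric.mem_ball_self hr⟩
  have hmemV : ∀ w ∈ Metric.ball p.2 r, (z'', w) ∈ Metric.ball p r \ S := by
    intro w hw
    refine ⟨by rw [hball]; exact Set.mk_mem_prod hz''b hw, fun hmem => hz''q (hS _ hmem)⟩
  rw [isPathConnected_iff]
  refine ⟨⟨(z'', p.2), hmemV _ (Metric.mem_ball_self hr)⟩, ?_⟩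
  rintro ⟨z, w⟩ hx ⟨z', w'⟩ hy
  have hslice : ∀ w₀ : ℂ, IsPathConnected (Metric.ball p.1 r \ {ζ : ℂ | (ζ, w₀) ∈ S}) :=
    fun w₀ => ball_diff_countable' hr
      ((Set.countable_range q).mono (fun ζ hζ => hS _ hζ))
  have hmap : ∀ w₀ ∈ Metric.ball p.2 r,
      ((fun ζ : ℂ => (ζ, w₀)) '' (Metric.ball p.1 r \ {ζ : ℂ | (ζ, w₀) ∈ S}))
        ⊆ Metric.ball p r \ S := by
    rintro w₀ hw₀ _ ⟨ζ, ⟨hζb, hζS⟩, rfl⟩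
    exact ⟨by rw [hball]; exact Set.mk_mem_prod hζb hw₀, hζS⟩
  rw [hball] at hx hy
  obtain ⟨⟨hz, hw⟩, hxS⟩ := hx
  obtain ⟨⟨hz', hw'⟩, hyS⟩ := hy
  have hcont : ∀ w₀ : ℂ, Continuous (fun ζ : ℂ => (ζ, w₀)) :=
    fun w₀ => continuous_id.prodMk continuous_const
  have hz''S : ∀ w₀ : ℂ, z'' ∈ Metric.ball p.1 r \ {ζ : ℂ | (ζ, w₀) ∈ S} :=
    fun w₀ => ⟨hz''b, fun hc => hz''q (hS _ hc)⟩
  have j1 : JoinedIn (Metric.ball p r \ S) (z, w) (z'', w) := by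
    have h := (hslice w).image (hcont w)
    exact (h.joinedIn (z, w) ⟨z, ⟨hz, hxS⟩, rfl⟩ (z'', w) ⟨z'', hz''S w, rfl⟩).mono (hmap w hw)
  have j3 : JoinedIn (Metric.ball p r \ S) (z'', w') (z', w') := by
    have h := (hslice w').image (hcont w')
    exact (h.joinedIn (z'', w') ⟨z'', hz''S w', rfl⟩ (z', w') ⟨z', ⟨hz', hyS⟩, rfl⟩).mono
      (hmap w' hw')
  have j2 : JoinedIn (Metric.ball p r \ S) (z'', w) (z'', w') := by
    have hconv : Convex ℝ (({z''} : Set ℂ) ×ˢ Metric.ball p.2 r) :=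
      (convex_singleton z'').prod (convex_ball p.2 r)
    have hpc2 : IsPathConnected (({z''} : Set ℂ) ×ˢ Metric.ball p.2 r) :=
      hconv.isPathConnected ⟨(z'', p.2), Set.mk_mem_prod rfl (Metric.mem_ball_self hr)⟩
    have hsub2 : (({z''} : Set ℂ) ×ˢ Metric.ball p.2 r) ⊆ Metric.ball p r \ S := by
      rintro ⟨a, b⟩ ⟨ha, hb⟩
      have ha' : a = z'' := ha
      subst ha'
      exact hmemV b hb
    exact (hpc2.joinedIn _ (Set.mk_mem_prod rfl hw) _ (Set.mk_mem_prod rfl hw')).mono hsub2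
  exact (j1.trans j2).trans j3

private lemma domain_diff_connected' {S : Set (ℂ × ℂ)}
    (hkey : ∀ (p : ℂ × ℂ) (r : ℝ), 0 < r → IsPathConnected (Metric.ball p r \ S))
    (hSint : interior S = ∅)
    {U : Set (ℂ × ℂ)} (hUsub : U ⊆ Metric.ball (0 : ℂ) 1 ×ˢ Metric.ball (0 : ℂ) 1)
    (hUo : IsOpen U) (hUc : IsConnected U)
    (hcl : closure S ∩ (Metric.ball (0 : ℂ) 1 ×ˢ Metric.ball (0 : ℂ) 1) ⊆ S) :
    IsConnected (U \ S) := by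
  have hopen_nonS : ∀ V : Set (ℂ × ℂ), IsOpen V → V.Nonempty → (V \ S).Nonempty := by
    rintro V hV ⟨x, hx⟩
    by_contra h
    rw [Set.not_nonempty_iff_eq_empty, Set.diff_eq_empty] at h
    have h2 : V ⊆ interior S := interior_maximal h hV
    rw [hSint] at h2
    exact h2 hx
  constructor
  · exact hopen_nonS U hUo hUc.nonempty
  intro u v hu hv hsub hne1 hne2
  by_contra hdisj
  rw [Set.not_nonempty_iff_eq_empty] at hdisj
  have hO : ∀ w : Set (ℂ × ℂ),
      IsOpen {p : ℂ × ℂ | ∃ r > 0, Metric.ball p r ⊆ U ∧ Metric.ball p r \ S ⊆ w} := by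
    intro w
    rw [Metric.isOpen_iff]
    rintro p ⟨r, hr, hbU, hbw⟩
    refine ⟨r / 2, by linarith, fun p' hp' => ?_⟩
    have hsb : Metric.ball p' (r / 2) ⊆ Metric.ball p r := by
      apply Metric.ball_subset_ball'
      rw [Metric.mem_ball] at hp'
      linarith
    exact ⟨r / 2, by linarith, hsb.trans hbU, (Set.diff_subset_diff_left hsb).trans hbw⟩
  have hcover : U ⊆ {p : ℂ × ℂ | ∃ r > 0, Metric.ball p r ⊆ U ∧ Metric.ball p r \ S ⊆ u}
      ∪ {p : ℂ × ℂ | ∃ r > 0, Metric.ball p r ⊆ U ∧ Metric.ball p r \ S ⊆ v} := by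
    intro p hp
    obtain ⟨r, hr, hbU⟩ := Metric.isOpen_iff.1 hUo p hp
    have hpc := hkey p r hr
    have hsub' : Metric.ball p r \ S ⊆ u ∪ v := fun x hx => hsub ⟨hbU hx.1, hx.2⟩
    by_cases hcu : Metric.ball p r \ S ⊆ u
    · exact Or.inl ⟨r, hr, hbU, hcu⟩
    · refine Or.inr ⟨r, hr, hbU, ?_⟩
      obtain ⟨x₀, hx₀, hx₀u⟩ := Set.not_subset.1 hcu
      intro x hx
      by_contra hxv
      have hxu : x ∈ u := (hsub' hx).resolve_right hxv
      have hx₀v : x₀ ∈ v := (hsub' hx₀).resolve_left hx₀u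
      obtain ⟨y, hy, hyu, hyv⟩ :=
        hpc.isConnected.isPreconnected u v hu hv hsub' ⟨x, hx, hxu⟩ ⟨x₀, hx₀, hx₀v⟩
      have hmem : y ∈ (U \ S) ∩ (u ∩ v) := ⟨⟨hbU hy.1, hy.2⟩, hyu, hyv⟩
      rw [hdisj] at hmem
      exact hmem
  have hkey1 : ∀ x ∈ (U \ S) ∩ u,
      x ∈ {p : ℂ × ℂ | ∃ r > 0, Metric.ball p r ⊆ U ∧ Metric.ball p r \ S ⊆ u} := by
    rintro x ⟨hxUS, hxu⟩
    rcases hcover hxUS.1 with h | h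
    · exact h
    · obtain ⟨r, hr, hbU, hbv⟩ := h
      exfalso
      have hxv : x ∈ v := hbv ⟨Metric.mem_ball_self hr, hxUS.2⟩
      have hmem : x ∈ (U \ S) ∩ (u ∩ v) := ⟨hxUS, hxu, hxv⟩
      rw [hdisj] at hmem
      exact hmem
  have hkey2 : ∀ x ∈ (U \ S) ∩ v,
      x ∈ {p : ℂ × ℂ | ∃ r > 0, Metric.ball p r ⊆ U ∧ Metric.ball p r \ S ⊆ v} := by
    rintro x ⟨hxUS, hxv⟩
    rcases hcover hxUS.1 with h | h
    · obtain ⟨r, hr, hbU, hbu⟩ := h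
      exfalso
      have hxu : x ∈ u := hbu ⟨Metric.mem_ball_self hr, hxUS.2⟩
      have hmem : x ∈ (U \ S) ∩ (u ∩ v) := ⟨hxUS, hxu, hxv⟩
      rw [hdisj] at hmem
      exact hmem
    · exact h
  obtain ⟨x₁, hx₁⟩ := hne1
  obtain ⟨x₂, hx₂⟩ := hne2
  obtain ⟨y, hyU, hy₁, hy₂⟩ :=
    hUc.isPreconnected _ _ (hO u) (hO v) hcover
      ⟨x₁, hx₁.1.1, hkey1 x₁ hx₁⟩ ⟨x₂, hx₂.1.1, hkey2 x₂ hx₂⟩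
  obtain ⟨r₁, hr₁, hb₁, hw₁⟩ := hy₁
  obtain ⟨r₂, hr₂, hb₂, hw₂⟩ := hy₂
  have hrm : 0 < min r₁ r₂ := lt_min hr₁ hr₂
  obtain ⟨x, hxb, hxS⟩ := hopen_nonS (Metric.ball y (min r₁ r₂)) Metric.isOpen_ball
    ⟨y, Metric.mem_ball_self hrm⟩
  have hxu : x ∈ u := hw₁ ⟨Metric.ball_subset_ball (min_le_left _ _) hxb, hxS⟩
  have hxv : x ∈ v := hw₂ ⟨Metric.ball_subset_ball (min_le_right _ _) hxb, hxS⟩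
  have hmem : x ∈ (U \ S) ∩ (u ∩ v) :=
    ⟨⟨hb₁ (Metric.ball_subset_ball (min_le_left _ _) hxb), hxS⟩, hxu, hxv⟩
  rw [hdisj] at hmem
  exact hmem

end SakaiHelpers

open JP in
/-- **Remark 3.2** (counterexample to Sakai's argument): for an enumeration
`(q_k)` of the Gaussian rationals in the unit disc `E`, the set
`S = ⋃_k {q_k} × closedDisc(1 - 1/k, 1/k²)` is relatively closed in `E × E`, has
empty interior, does not separate domains, and yet the set `A` of `a ∈ E` whose
fiber `S_{(a,·)}` has empty interior equals `E ∖ (ℚ + iℚ)`, which has empty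
interior; in particular no set `(A×B) ∩ U ∖ S` contains an open polydisc. -/
theorem sakai_counterexample
    (q : ℕ → ℂ) (hinj : Function.Injective q)
    (hrange : Set.range q =
      {z : ℂ | z ∈ Metric.ball (0 : ℂ) 1 ∧ ∃ r s : ℚ, z = (r : ℂ) + (s : ℂ) * Complex.I})
    (S : Set (ℂ × ℂ))
    (hS : S = ⋃ k : ℕ,
      {q k} ×ˢ Metric.closedBall ((1 - ((k : ℝ) + 1)⁻¹ : ℝ) : ℂ) ((((k : ℝ) + 1) ^ 2)⁻¹)) :
    -- (i) `S` is relatively closed in `E × E`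
    closure S ∩ (Metric.ball (0 : ℂ) 1 ×ˢ Metric.ball (0 : ℂ) 1) ⊆ S ∧
    -- (ii) `int S = ∅`
    interior S = ∅ ∧
    -- (iii) `S` does not separate domains
    (∀ U : Set (ℂ × ℂ), U ⊆ Metric.ball (0 : ℂ) 1 ×ˢ Metric.ball (0 : ℂ) 1 →
      IsOpen U → IsConnected U → IsConnected (U \ S)) ∧
    -- (iv) `A = E ∖ (ℚ + iℚ)`, which has empty interior
    {a ∈ Metric.ball (0 : ℂ) 1 | interior {w : ℂ | (a, w) ∈ S} = ∅} =
      Metric.ball (0 : ℂ) 1 \ {z : ℂ | ∃ r s : ℚ, z = (r : ℂ) + (s : ℂ) * Complex.I} ∧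
    interior {a ∈ Metric.ball (0 : ℂ) 1 | interior {w : ℂ | (a, w) ∈ S} = ∅} = ∅ ∧
    -- `B = E`
    {b ∈ Metric.ball (0 : ℂ) 1 | interior {z : ℂ | (z, b) ∈ S} = ∅} =
      Metric.ball (0 : ℂ) 1 ∧
    -- in particular, some domain `U ⊆ E × E` is such that `(A × B) ∩ U ∖ S`
    -- contains no open polydisc
    ∃ U : Set (ℂ × ℂ), IsOpen U ∧ IsConnected U ∧
      U ⊆ Metric.ball (0 : ℂ) 1 ×ˢ Metric.ball (0 : ℂ) 1 ∧
      ∀ (c₁ c₂ : ℂ) (r : ℝ), 0 < r →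
        ¬ (Metric.ball c₁ r ×ˢ Metric.ball c₂ r ⊆
          (({a ∈ Metric.ball (0 : ℂ) 1 | interior {w : ℂ | (a, w) ∈ S} = ∅} ×ˢ
            {b ∈ Metric.ball (0 : ℂ) 1 | interior {z : ℂ | (z, b) ∈ S} = ∅}) ∩ U) \ S) := by
  have hS' : S = ⋃ k : ℕ, ({q k} : Set ℂ) ×ˢ
      Metric.closedBall ((1 - ((k : ℝ) + 1)⁻¹ : ℝ) : ℂ) ((((k : ℝ) + 1) ^ 2)⁻¹) := hS
  have hfst : ∀ p ∈ S, p.1 ∈ Set.range q := by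
    intro p hp
    rw [hS', Set.mem_iUnion] at hp
    obtain ⟨k, hk⟩ := hp
    exact ⟨k, (hk.1 : p.1 ∈ ({q k} : Set ℂ)).symm⟩
  have hPclosed : ∀ k : ℕ, IsClosed (({q k} : Set ℂ) ×ˢ
      Metric.closedBall ((1 - ((k : ℝ) + 1)⁻¹ : ℝ) : ℂ) ((((k : ℝ) + 1) ^ 2)⁻¹)) :=
    fun k => isClosed_singleton.prod Metric.isClosed_closedBall
  have hk1 : ∀ k : ℕ, (1 : ℝ) ≤ (k : ℝ) + 1 := by
    intro k
    have := Nat.cast_nonneg (α := ℝ) k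
    linarith
  have hkinv1 : ∀ k : ℕ, ((k : ℝ) + 1)⁻¹ ≤ 1 := by
    intro k
    have h0 : (0 : ℝ) < (k : ℝ) + 1 := lt_of_lt_of_le one_pos (hk1 k)
    rw [inv_le_one_iff₀]
    right; exact hk1 k
  have hPnorm : ∀ k : ℕ, ∀ x : ℂ × ℂ, x ∈ ({q k} : Set ℂ) ×ˢ
      Metric.closedBall ((1 - ((k : ℝ) + 1)⁻¹ : ℝ) : ℂ) ((((k : ℝ) + 1) ^ 2)⁻¹) →
      1 - ((k : ℝ) + 1)⁻¹ - (((k : ℝ) + 1) ^ 2)⁻¹ ≤ ‖x.2‖ := by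
    intro k x hx
    have hle : dist x.2 (((1 - ((k : ℝ) + 1)⁻¹ : ℝ)) : ℂ) ≤ (((k : ℝ) + 1) ^ 2)⁻¹ :=
      Metric.mem_closedBall.1 hx.2
    have h2 : ‖(((1 - ((k : ℝ) + 1)⁻¹ : ℝ)) : ℂ)‖ - ‖x.2‖
        ≤ dist x.2 (((1 - ((k : ℝ) + 1)⁻¹ : ℝ)) : ℂ) := by
      rw [dist_comm, dist_eq_norm]
      exact norm_sub_norm_le _ _
    have h3 : ‖(((1 - ((k : ℝ) + 1)⁻¹ : ℝ)) : ℂ)‖ = 1 - ((k : ℝ) + 1)⁻¹ := by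
      rw [Complex.norm_real, Real.norm_eq_abs, abs_of_nonneg]
      have := hkinv1 k
      linarith
    linarith
  have part1 : closure S ∩ (Metric.ball (0 : ℂ) 1 ×ˢ Metric.ball (0 : ℂ) 1) ⊆ S := by
    rintro ⟨a, w⟩ ⟨hclmem, hawE⟩
    have hwlt : ‖w‖ < 1 := by
      have := hawE.2
      rwa [Metric.mem_ball, dist_zero_right] at this
    set t : ℝ := ‖w‖ with ht
    obtain ⟨K, hK⟩ := exists_nat_ge (4 / (1 - t))
    have hsplit : S ⊆ (⋃ k ∈ Finset.range (K + 1), ({q k} : Set ℂ) ×ˢ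
        Metric.closedBall ((1 - ((k : ℝ) + 1)⁻¹ : ℝ) : ℂ) ((((k : ℝ) + 1) ^ 2)⁻¹))
        ∪ ((Set.univ : Set ℂ) ×ˢ {z : ℂ | (1 + t) / 2 ≤ ‖z‖}) := by
      rw [hS']
      intro x hx
      rw [Set.mem_iUnion] at hx
      obtain ⟨k, hk⟩ := hx
      by_cases hkK : k < K + 1
      · exact Or.inl (Set.mem_biUnion (Finset.mem_range.2 hkK) hk)
      · right
        push_neg at hkK
        refine ⟨trivial, ?_⟩
        have hk4 : 4 / (1 - t) ≤ (k : ℝ) + 1 := by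
          have h1 : (K : ℝ) ≤ (k : ℝ) := by
            exact_mod_cast le_trans (Nat.le_succ K) hkK
          linarith
        have hnorm := hPnorm k x hk
        set a' : ℝ := (k : ℝ) + 1 with ha'
        have ha1 : (1 : ℝ) ≤ a' := hk1 k
        have ha0 : (0 : ℝ) < a' := lt_of_lt_of_le one_pos ha1
        have h1t : (0 : ℝ) < 1 - t := by linarith
        have h4 : 4 ≤ a' * (1 - t) := by
          rw [div_le_iff₀ h1t] at hk4
          linarith
        have hb0 : (0 : ℝ) < a'⁻¹ := inv_pos.2 ha0
        have hab : a' * a'⁻¹ = 1 := mul_inv_cancel₀ (ne_of_gt ha0)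
        have hb1 : a'⁻¹ ≤ 1 := hkinv1 k
        have h4b : 4 * a'⁻¹ ≤ 1 - t := by nlinarith
        have hbsq : (a' ^ 2)⁻¹ = a'⁻¹ * a'⁻¹ := by rw [sq, mul_inv]
        have hfinal : (1 + t) / 2 ≤ 1 - a'⁻¹ - (a' ^ 2)⁻¹ := by
          rw [hbsq]
          nlinarith
        show (1 + t) / 2 ≤ ‖x.2‖
        linarith
    have hclosed₁ : IsClosed ((⋃ k ∈ Finset.range (K + 1), ({q k} : Set ℂ) ×ˢ
        Metric.closedBall ((1 - ((k : ℝ) + 1)⁻¹ : ℝ) : ℂ) ((((k : ℝ) + 1) ^ 2)⁻¹))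
        ∪ ((Set.univ : Set ℂ) ×ˢ {z : ℂ | (1 + t) / 2 ≤ ‖z‖})) := by
      apply IsClosed.union
      · exact (Finset.range (K + 1)).finite_toSet.isClosed_biUnion (fun k _ => hPclosed k)
      · exact isClosed_univ.prod (isClosed_le continuous_const continuous_norm)
    rcases closure_minimal hsplit hclosed₁ hclmem with h | h
    · rw [Set.mem_iUnion₂] at h
      obtain ⟨k, _, hk⟩ := h
      rw [hS']
      exact Set.mem_iUnion.2 ⟨k, hk⟩
    · exfalso
      have h2 : (1 + t) / 2 ≤ ‖w‖ := h.2
      rw [← ht] at h2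
      linarith
  have part2 : interior S = ∅ := by
    have h1 : S ⊆ Set.range q ×ˢ (Set.univ : Set ℂ) := fun p hp => ⟨hfst p hp, trivial⟩
    have h2 := interior_mono h1
    rw [interior_prod_eq, interior_univ,
      countable_interior_empty' (Set.countable_range q), Set.empty_prod] at h2
    exact Set.subset_empty_iff.1 h2
  have part3 : ∀ U : Set (ℂ × ℂ), U ⊆ Metric.ball (0 : ℂ) 1 ×ˢ Metric.ball (0 : ℂ) 1 →
      IsOpen U → IsConnected U → IsConnected (U \ S) :=
    fun U hU hUo hUc =>
      domain_diff_connected' (fun p r hr => ball_diff_S' q hfst p hr) part2 hU hUo hUc part1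
  have part4 : {a ∈ Metric.ball (0 : ℂ) 1 | interior {w : ℂ | (a, w) ∈ S} = ∅} =
      Metric.ball (0 : ℂ) 1 \ {z : ℂ | ∃ r s : ℚ, z = (r : ℂ) + (s : ℂ) * Complex.I} := by
    ext a
    simp only [Set.mem_sep_iff, Set.mem_diff, Set.mem_setOf_eq]
    constructor
    · rintro ⟨haE, hint⟩
      refine ⟨haE, fun hgauss => ?_⟩
      have haq : a ∈ Set.range q := by rw [hrange]; exact ⟨haE, hgauss⟩
      obtain ⟨k, rfl⟩ := haq
      have hball : Metric.ball ((1 - ((k : ℝ) + 1)⁻¹ : ℝ) : ℂ) ((((k : ℝ) + 1) ^ 2)⁻¹)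
          ⊆ {w : ℂ | (q k, w) ∈ S} := by
        intro w hw
        rw [Set.mem_setOf_eq, hS']
        exact Set.mem_iUnion.2 ⟨k, ⟨rfl, Metric.ball_subset_closedBall hw⟩⟩
      have hrpos : (0 : ℝ) < (((k : ℝ) + 1) ^ 2)⁻¹ := by positivity
      have hsubint := interior_maximal hball Metric.isOpen_ball
      rw [hint] at hsubint
      exact hsubint (Metric.mem_ball_self hrpos)
    · rintro ⟨haE, hgauss⟩
      refine ⟨haE, ?_⟩
      have hfib : {w : ℂ | (a, w) ∈ S} = ∅ := by
        ext w
        simp only [Set.mem_setOf_eq, Set.mem_empty_iff_false, iff_false]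
        intro hmem
        have h := hfst (a, w) hmem
        rw [hrange] at h
        exact hgauss h.2
      rw [hfib, interior_empty]
  have part5 : interior {a ∈ Metric.ball (0 : ℂ) 1 | interior {w : ℂ | (a, w) ∈ S} = ∅}
      = ∅ := by
    rw [part4]
    have hsub : Metric.ball (0 : ℂ) 1 \ {z : ℂ | ∃ r s : ℚ, z = (r : ℂ) + (s : ℂ) * Complex.I}
        ⊆ {z : ℂ | ∃ r s : ℚ, z = (r : ℂ) + (s : ℂ) * Complex.I}ᶜ := fun x hx => hx.2
    have h := interior_mono hsub
    rw [interior_compl, gaussian_dense'.closure_eq, Set.compl_univ] at h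
    exact Set.subset_empty_iff.1 h
  have part6 : {b ∈ Metric.ball (0 : ℂ) 1 | interior {z : ℂ | (z, b) ∈ S} = ∅} =
      Metric.ball (0 : ℂ) 1 := by
    ext b
    simp only [Set.mem_sep_iff, and_iff_left_iff_imp]
    intro _
    have hsub : {z : ℂ | (z, b) ∈ S} ⊆ Set.range q := fun z hz => hfst (z, b) hz
    have h := interior_mono hsub
    rw [countable_interior_empty' (Set.countable_range q)] at h
    exact Set.subset_empty_iff.1 h
  refine ⟨part1, part2, part3, part4, part5, part6, ?_⟩
  refine ⟨Metric.ball (0 : ℂ) 1 ×ˢ Metric.ball (0 : ℂ) 1,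
    Metric.isOpen_ball.prod Metric.isOpen_ball, ?_, subset_rfl, ?_⟩
  · exact (((convex_ball (0 : ℂ) 1).prod (convex_ball (0 : ℂ) 1)).isPathConnected
      ⟨(0, 0), Set.mk_mem_prod (Metric.mem_ball_self one_pos)
        (Metric.mem_ball_self one_pos)⟩).isConnected
  · intro c₁ c₂ r hr hsub
    have hA : Metric.ball c₁ r ⊆
        {a ∈ Metric.ball (0 : ℂ) 1 | interior {w : ℂ | (a, w) ∈ S} = ∅} := by
      intro z hz
      have h := hsub (Set.mk_mem_prod hz (Metric.mem_ball_self hr))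
      exact h.1.1.1
    have h := interior_maximal hA Metric.isOpen_ball
    rw [part5] at h
    exact h (Metric.mem_ball_self hr)
end
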